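/- Suppose a distribution D over ℝ^d × {±1} is linearly r-separated by f_{w,b} with robust margin γ_r (every point of S_r^+ ∪ S_r^-, the r-expanded supports, is at ℓ₂ distance ≥ γ_r from the decision hyperplane). After appending the coordinate R_S (the ℓ₂ diameter of the translated sample) to each translated sample point x - x₁, there exists a unit vector u ∈ ℝ^{d+1} such that for every sample point (xᵢ, yᵢ) and every z with ‖z - (xᵢ - x₁)‖_p ≤ r, ⟨u, yᵢ (z | R_S)⟩ ≥ γ_r/√2, provided the sample contains both a positive and a negative example. Moreover every augmented point satisfies ‖(xᵢ - x₁) | R_S‖₂ ≤ √2 · diam₂(D). -/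

import Mathlib

open Finset
open scoped ENNReal

/-- The standard inner product on `ℝ^d`. -/
def dotp {d : ℕ} (w x : Fin d → ℝ) : ℝ := ∑ i, w i * x i

/-- The Euclidean (ℓ₂) norm on `ℝ^d`. -/
noncomputable def enorm2 {d : ℕ} (x : Fin d → ℝ) : ℝ := Real.sqrt (∑ i, x i ^ 2)

/-- The ℓ_p norm on `ℝ^d`. -/
noncomputable def pnorm (p : ℝ≥0∞) [Fact (1 ≤ p)] {d : ℕ} (x : Fin d → ℝ) : ℝ :=
  ‖(WithLp.equiv p (Fin d → ℝ)).symm x‖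

lemma dotp_le {d : ℕ} (w v : Fin d → ℝ) : dotp w v ≤ enorm2 w * enorm2 v :=
  Real.sum_mul_le_sqrt_mul_sqrt _ _ _

lemma neg_le_dotp {d : ℕ} (w v : Fin d → ℝ) : -(enorm2 w * enorm2 v) ≤ dotp w v := by
  have h := dotp_le w (-v)
  have h1 : dotp w (-v) = -dotp w v := by simp [dotp]
  have h2 : enorm2 (-v) = enorm2 v := by simp [enorm2]
  rw [h1, h2] at h; linarith

lemma dotp_sub {d : ℕ} (w a c : Fin d → ℝ) : dotp w (a - c) = dotp w a - dotp w c := by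
  simp [dotp, mul_sub, Finset.sum_sub_distrib]

lemma dotp_add {d : ℕ} (w a c : Fin d → ℝ) : dotp w (a + c) = dotp w a + dotp w c := by
  simp [dotp, mul_add, Finset.sum_add_distrib]

lemma sum_sq_eq {d : ℕ} (v : Fin d → ℝ) : ∑ i, v i ^ 2 = enorm2 v ^ 2 :=
  (Real.sq_sqrt (Finset.sum_nonneg fun i _ => sq_nonneg _)).symm

/-- If `D` (with positive/negative supports `P`, `N`) is linearly
`r`-separated with robust margin `γ_r` by `f_{w,b}`, then after translating the sample
by `x₁` and appending the coordinate `R_S` (the ℓ₂ diameter of the translated sample),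
there is a unit vector `u ∈ ℝ^{d+1}` giving robust margin `γ_r/√2` through the origin
for all augmented sample points, provided the sample contains a positive and a negative
example; moreover every augmented point has ℓ₂ norm at most `√2 · diam₂(D)`. -/
theorem augmented_margin (d n : ℕ) (p : ℝ≥0∞) [Fact (1 ≤ p)] (hp : 1 < p)
    (r γ : ℝ) (hr : 0 < r) (hγ : 0 < γ)
    (P N : Set (Fin d → ℝ))
    (w : Fin d → ℝ) (b : ℝ) (hw : enorm2 w = 1)
    (hsepP : ∀ x ∈ P, ∀ z, pnorm p (z - x) ≤ r → b + γ ≤ dotp w z)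
    (hsepN : ∀ x ∈ N, ∀ z, pnorm p (z - x) ≤ r → dotp w z ≤ b - γ)
    (Ddiam : ℝ) (hDdiam : ∀ a ∈ P ∪ N, ∀ a' ∈ P ∪ N, enorm2 (a - a') ≤ Ddiam)
    (x : Fin (n + 1) → Fin d → ℝ) (y : Fin (n + 1) → ℝ)
    (hxy : ∀ i, (y i = 1 ∧ x i ∈ P) ∨ (y i = -1 ∧ x i ∈ N))
    (hpos : ∃ i, y i = 1) (hneg : ∃ i, y i = -1)
    (RS : ℝ) (hRS : IsGreatest {t | ∃ i j, t = enorm2 (x i - x j)} RS) :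
    ∃ u : Fin (d + 1) → ℝ, enorm2 u = 1 ∧
      (∀ i, ∀ z, pnorm p (z - (x i - x 0)) ≤ r →
        γ / Real.sqrt 2 ≤ y i * dotp u (Fin.snoc z RS)) ∧
      ∀ i, enorm2 (Fin.snoc (x i - x 0) RS) ≤ Real.sqrt 2 * Ddiam := by
  set β : ℝ := b - dotp w (x 0) with hβ
  -- translated margin
  have key : ∀ i, ∀ z, pnorm p (z - (x i - x 0)) ≤ r → γ ≤ y i * (dotp w z - β) := by
    intro i z hz
    have hz' : pnorm p ((z + x 0) - x i) ≤ r := by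
      have : (z + x 0) - x i = z - (x i - x 0) := by abel
      rwa [this]
    rcases hxy i with ⟨hy, hxi⟩ | ⟨hy, hxi⟩
    · have := hsepP (x i) hxi (z + x 0) hz'
      rw [dotp_add] at this
      rw [hy]; nlinarith
    · have := hsepN (x i) hxi (z + x 0) hz'
      rw [dotp_add] at this
      rw [hy]; nlinarith
  have hself : ∀ i, γ ≤ y i * (dotp w (x i - x 0) - β) := by
    intro i
    apply key i (x i - x 0)
    have : (x i - x 0) - (x i - x 0) = (0 : Fin d → ℝ) := by abel
    rw [this]
    simp only [pnorm]
    rw [show ((WithLp.equiv p (Fin d → ℝ)).symm 0) = 0 from rfl, norm_zero]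
    exact hr.le
  -- bound enorm2 of translated points by RS
  have hle : ∀ i, enorm2 (x i - x 0) ≤ RS := fun i => hRS.2 ⟨i, 0, rfl⟩
  obtain ⟨ip, hip⟩ := hpos
  obtain ⟨jn, hjn⟩ := hneg
  have hβub : β ≤ RS - γ := by
    have h1 := hself ip
    rw [hip, one_mul] at h1
    have h2 := dotp_le w (x ip - x 0)
    rw [hw, one_mul] at h2
    have h3 := hle ip
    linarith
  have hβlb : -(RS - γ) ≤ β := by
    have h1 := hself jn
    rw [hjn] at h1
    have h2 := neg_le_dotp w (x jn - x 0)
    rw [hw, one_mul] at h2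
    have h3 := hle jn
    nlinarith
  have hRSpos : 0 < RS := by linarith
  set c : ℝ := β / RS with hc
  have hc1 : c ^ 2 ≤ 1 := by
    rw [hc, div_pow, div_le_one (by positivity)]
    nlinarith
  set M : ℝ := Real.sqrt (1 + c ^ 2) with hM
  have hM2 : M ^ 2 = 1 + c ^ 2 := Real.sq_sqrt (by positivity)
  have hMpos : 0 < M := Real.sqrt_pos.mpr (by positivity)
  have hMle : M ≤ Real.sqrt 2 := Real.sqrt_le_sqrt (by linarith)
  have hw2 : ∑ i, w i ^ 2 = 1 := by
    have := sum_sq_eq w; rw [hw] at this; simpa using this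
  refine ⟨fun k => (Fin.snoc w (-c) : Fin (d + 1) → ℝ) k / M, ?_, ?_, ?_⟩
  · -- unit norm
    unfold enorm2
    rw [show (∑ k, ((Fin.snoc w (-c) : Fin (d + 1) → ℝ) k / M) ^ 2) = 1 by
      simp only [div_pow, ← Finset.sum_div, Fin.sum_univ_castSucc, Fin.snoc_castSucc,
        Fin.snoc_last]
      rw [hw2, neg_sq, ← hM2]
      exact div_self (by positivity)]
    exact Real.sqrt_one
  · -- margin
    intro i z hz
    have hdot : dotp (fun k => (Fin.snoc w (-c) : Fin (d + 1) → ℝ) k / M)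
        (Fin.snoc z RS) = (dotp w z - β) / M := by
      simp only [dotp, Fin.sum_univ_castSucc, Fin.snoc_castSucc, Fin.snoc_last]
      have hcRS : c * RS = β := by rw [hc]; field_simp
      simp_rw [div_mul_eq_mul_div]
      rw [← Finset.sum_div, ← add_div]
      congr 1
      rw [neg_mul, hcRS, sub_eq_add_neg]
    rw [hdot, mul_div_assoc']
    rw [div_le_div_iff₀ (by positivity) hMpos]
    have h1 := key i z hz
    have h2 : γ * M ≤ γ * Real.sqrt 2 := mul_le_mul_of_nonneg_left hMle hγ.le
    have h3 := mul_le_mul_of_nonneg_right h1 (Real.sqrt_nonneg 2)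
    linarith
  · -- norm bound
    intro i
    have hRSD : RS ≤ Ddiam := by
      obtain ⟨a, bb, hab⟩ := hRS.1
      rw [hab]
      have hm : ∀ j, x j ∈ P ∪ N := by
        intro j; rcases hxy j with ⟨_, h⟩ | ⟨_, h⟩
        · exact Set.mem_union_left _ h
        · exact Set.mem_union_right _ h
      exact hDdiam _ (hm a) _ (hm bb)
    have hDpos : 0 < Ddiam := lt_of_lt_of_le hRSpos hRSD
    have hx : enorm2 (x i - x 0) ≤ Ddiam := (hle i).trans hRSD
    unfold enorm2
    rw [Fin.sum_univ_castSucc]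
    simp only [Fin.snoc_castSucc, Fin.snoc_last]
    have h1 : ∑ k : Fin d, (x i - x 0) k ^ 2 ≤ Ddiam ^ 2 := by
      rw [sum_sq_eq]
      exact pow_le_pow_left₀ (Real.sqrt_nonneg _) hx 2
    have h2 : RS ^ 2 ≤ Ddiam ^ 2 := pow_le_pow_left₀ hRSpos.le hRSD 2
    calc Real.sqrt (∑ k : Fin d, (x i - x 0) k ^ 2 + RS ^ 2)
        ≤ Real.sqrt (2 * Ddiam ^ 2) := Real.sqrt_le_sqrt (by linarith)
      _ = Real.sqrt 2 * Ddiam := by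
          rw [Real.sqrt_mul (by norm_num), Real.sqrt_sq hDpos.le]
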